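/- arXiv:1506.07839 — 5 statements merged into one kernel-verified Lean document; each statement's English description precedes it below -/
import Mathlib

section
/- Let R be a commutative integral domain and let z ∈ R[X]. Then every divisor d of z in R[X] that is not a unit is divisible by X (i.e., for all d ∈ R[X], d ∣ z and ¬(d ∣ 1) imply X ∣ d) if and only if there exist a natural number n and a unit a of R with z = C a · X^n. -/
open Polynomial in
private lemma aux6 {R : Type*} [CommRing R] [IsDomain R] :
    ∀ N (z : R[X]), z.natDegree = N → z ≠ 0 →
    (∀ d : R[X], d ∣ z → ¬ d ∣ 1 → (X : R[X]) ∣ d) →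
      ∃ (n : ℕ) (a : Rˣ), z = C (a : R) * X ^ n := by
  intro N
  induction N using Nat.strong_induction_on with
  | _ N ih =>
    intro z hdeg hz h
    by_cases hX : (X : R[X]) ∣ z
    · obtain ⟨w, rfl⟩ := hX
      have hw : w ≠ 0 := by rintro rfl; simp at hz
      have hlt : w.natDegree < N := by
        subst hdeg
        rw [natDegree_mul X_ne_zero hw, natDegree_X]
        omega
      obtain ⟨m, a, rfl⟩ := ih _ hlt w rfl hw (fun d hd hd1 => h d (hd.mul_left X) hd1)
      exact ⟨m + 1, a, by ring⟩
    · have h1 : z ∣ 1 := by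
        by_contra h1
        exact hX (h z dvd_rfl h1)
      obtain ⟨r, hr, hc⟩ := Polynomial.isUnit_iff.mp (isUnit_of_dvd_one h1)
      exact ⟨0, hr.unit, by simp [← hc, hr.unit_spec]⟩

open Polynomial in
theorem stmt_6 {R : Type*} [CommRing R] [IsDomain R] (z : R[X]) :
    (∀ d : R[X], d ∣ z → ¬ d ∣ 1 → (X : R[X]) ∣ d) ↔
      ∃ (n : ℕ) (a : Rˣ), z = C (a : R) * X ^ n := by
  constructor
  · intro h
    have hz : z ≠ 0 := by
      rintro rfl
      have hd1 : ¬ (1 + X : R[X]) ∣ 1 := by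
        intro hu
        have h0 := natDegree_eq_zero_of_isUnit (isUnit_of_dvd_one hu)
        have h1 : (X + (1:R[X])).natDegree = 1 := by
          simpa using natDegree_X_add_C (1:R)
        rw [add_comm] at h0
        omega
      have := h (1 + X) (dvd_zero _) hd1
      have hX1 : (X : R[X]) ∣ 1 := (dvd_add_right (dvd_refl X)).mp (by rwa [add_comm] at this)
      exact Polynomial.not_isUnit_X (isUnit_of_dvd_one hX1)
    exact aux6 _ z rfl hz h
  · rintro ⟨n, a, rfl⟩ d hd hd1
    by_contra hXd
    obtain ⟨e, he⟩ := hd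
    have hpow : (X : R[X]) ^ n ∣ d * e := he ▸ dvd_mul_left _ _
    have hXn : (X : R[X]) ^ n ∣ e := (prime_X (R := R)).pow_dvd_of_dvd_mul_left n hXd hpow
    obtain ⟨e', rfl⟩ := hXn
    have hcancel : d * e' = C (a : R) := by
      have hXne : (X : R[X]) ^ n ≠ 0 := pow_ne_zero _ X_ne_zero
      apply mul_right_cancel₀ hXne
      linear_combination -he
    exact hd1 (isUnit_iff_dvd_one.mp (isUnit_of_mul_isUnit_left (hcancel ▸ (isUnit_C.mpr a.isUnit))))
end

section
/- Let R be a commutative integral domain and let z ∈ R[X]. Then z = X^n for some natural number n ≥ 0 if and only if the following two conditions hold: (i) for all d ∈ R[X], if d ∣ z and ¬(d ∣ 1), then X ∣ d; and (ii) (X − 1) ∣ (z − 1). -/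
open Polynomial

private lemma X_not_dvd_one {R : Type*} [CommRing R] [IsDomain R] :
    ¬ (X : R[X]) ∣ 1 := by
  intro h
  have := Polynomial.natDegree_eq_zero_of_isUnit (isUnit_of_dvd_one h)
  simp [Polynomial.natDegree_X] at this

private lemma aux_main {R : Type*} [CommRing R] [IsDomain R] (z : R[X])
    (ih : ∀ w : R[X], w.natDegree < z.natDegree →
      ((∀ d : R[X], d ∣ w ∧ ¬ d ∣ 1 → (X : R[X]) ∣ d) ∧
        ((X : R[X]) - 1) ∣ (w - 1)) → ∃ n : ℕ, w = (X : R[X]) ^ n) :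
    ((∀ d : R[X], d ∣ z ∧ ¬ d ∣ 1 → (X : R[X]) ∣ d) ∧
      ((X : R[X]) - 1) ∣ (z - 1)) → ∃ n : ℕ, z = (X : R[X]) ^ n := by
  rintro ⟨h1, h2⟩
  have hXm1 : ¬ ((X : R[X]) - 1) ∣ 1 := by
    intro h
    have := Polynomial.natDegree_eq_zero_of_isUnit (isUnit_of_dvd_one h)
    have : ((X : R[X]) - 1).natDegree = 1 := by
      simpa using Polynomial.natDegree_X_sub_C (1 : R)
    omega
  have hXnd : ¬ (X : R[X]) ∣ (X - 1) := by
    intro h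
    exact X_not_dvd_one (by simpa using (dvd_sub (dvd_refl (X : R[X])) h))
  have hz0 : z ≠ 0 := by
    rintro rfl
    exact hXnd (h1 _ ⟨dvd_zero _, hXm1⟩)
  by_cases hXz : (X : R[X]) ∣ z
  · obtain ⟨w, rfl⟩ := hXz
    have hw0 : w ≠ 0 := by rintro rfl; simp at hz0
    have hdeg : w.natDegree < (X * w).natDegree := by
      rw [Polynomial.natDegree_mul (Polynomial.X_ne_zero) hw0,
        Polynomial.natDegree_X]
      omega
    have hw2 : ((X : R[X]) - 1) ∣ (w - 1) := by
      have : w - 1 = (X * w - 1) - ((X : R[X]) - 1) * w := by ring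
      rw [this]
      exact dvd_sub h2 (Dvd.intro w rfl)
    obtain ⟨m, hm⟩ := ih w hdeg ⟨fun d hd => h1 d ⟨hd.1.mul_left _, hd.2⟩, hw2⟩
    exact ⟨m + 1, by rw [hm, pow_succ, mul_comm]⟩
  · have hzu : z ∣ 1 := by
      by_contra h
      exact hXz (h1 z ⟨dvd_refl z, h⟩)
    obtain ⟨r, hr, hrz⟩ := Polynomial.isUnit_iff.mp (isUnit_of_dvd_one hzu)
    have heval : (z - 1).eval 1 = 0 := by
      obtain ⟨q, hq⟩ := h2
      rw [hq]
      simp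
    have : r = 1 := by
      rw [← hrz] at heval
      have := heval
      simp only [Polynomial.eval_sub, Polynomial.eval_C, Polynomial.eval_one] at this
      exact sub_eq_zero.mp this
    exact ⟨0, by rw [← hrz, this]; simp⟩


private lemma aux {R : Type*} [CommRing R] [IsDomain R] : ∀ z : R[X],
    ((∀ d : R[X], d ∣ z ∧ ¬ d ∣ 1 → (X : R[X]) ∣ d) ∧
      ((X : R[X]) - 1) ∣ (z - 1)) → ∃ n : ℕ, z = (X : R[X]) ^ n := by
  suffices h : ∀ N : ℕ, ∀ z : R[X], z.natDegree ≤ N →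
      ((∀ d : R[X], d ∣ z ∧ ¬ d ∣ 1 → (X : R[X]) ∣ d) ∧
        ((X : R[X]) - 1) ∣ (z - 1)) → ∃ n : ℕ, z = (X : R[X]) ^ n by
    exact fun z => h z.natDegree z le_rfl
  intro N
  induction N with
  | zero =>
    intro z hdz hyp
    exact aux_main z (fun w hw => absurd hw (by omega)) hyp
  | succ N ih =>
    intro z hdz hyp
    exact aux_main z (fun w hw hyp' => ih w (by omega) hyp') hyp

theorem stmt_7 {R : Type*} [CommRing R] [IsDomain R] (z : R[X]) :
    (∃ n : ℕ, z = (X : R[X]) ^ n) ↔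
      ((∀ d : R[X], d ∣ z ∧ ¬ d ∣ 1 → (X : R[X]) ∣ d) ∧
        ((X : R[X]) - 1) ∣ (z - 1)) := by
  constructor
  · rintro ⟨n, rfl⟩
    constructor
    · rintro d ⟨hd, hdu⟩
      obtain ⟨i, _, u, hu⟩ := (dvd_prime_pow Polynomial.prime_X n).mp hd
      rcases Nat.eq_zero_or_pos i with hi | hi
      · exact absurd (IsUnit.of_mul_eq_one (a := d) u (by rw [hu, hi, pow_zero])).dvd hdu
      · have hXdu : (X : R[X]) ∣ d * u := by
          rw [hu]
          exact dvd_pow_self _ hi.ne'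
        rcases Polynomial.prime_X.2.2 _ _ hXdu with h | h
        · exact h
        · exact absurd (h.trans u.isUnit.dvd) X_not_dvd_one
    · simpa using sub_dvd_pow_sub_pow (X : R[X]) 1 n
  · exact aux z
end

section
/- Let R be a commutative integral domain. Then the set {X^n : n ∈ ℕ, n ≥ 1} of positive powers of the indeterminate is definable with parameters in the first-order language of rings in the polynomial ring R[X]. -/
open Polynomial in
private lemma divisor_pow_X {R : Type*} [CommRing R] [IsDomain R] :
    ∀ (n : ℕ) (w v : R[X]), w * v = X ^ n → IsUnit w ∨ X ∣ w := by
  intro n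
  induction n with
  | zero => intro w v h; exact Or.inl (IsUnit.of_mul_eq_one (a := w) v (by simpa using h))
  | succ n ih =>
    intro w v h
    rcases (Polynomial.prime_X (R := R)).2.2 w v (h ▸ dvd_pow_self X n.succ_ne_zero) with hw | hv
    · exact Or.inr hw
    · obtain ⟨v', rfl⟩ := hv
      exact ih w v' (mul_left_cancel₀ Polynomial.X_ne_zero (by linear_combination h))

open Polynomial in
private lemma factor_unit_pow_X {R : Type*} [CommRing R] [IsDomain R] :
    ∀ (N : ℕ) (z : R[X]), z.natDegree ≤ N → z ≠ 0 → (∀ w, w ∣ z → IsUnit w ∨ X ∣ w) →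
      ∃ (n : ℕ) (u : R[X]), IsUnit u ∧ z = u * X ^ n := by
  intro N
  induction N with
  | zero =>
    intro z hdeg hz h
    exact ⟨0, z, (h z dvd_rfl).resolve_right (fun hX => by
      have := Polynomial.natDegree_le_of_dvd hX hz
      simp [Polynomial.natDegree_X] at this; omega), by simp⟩
  | succ N ih =>
    intro z hdeg hz h
    rcases h z dvd_rfl with hu | ⟨z₁, rfl⟩
    · exact ⟨0, z, hu, by simp⟩
    · have hz₁ : z₁ ≠ 0 := right_ne_zero_of_mul hz
      have hdeg' : z₁.natDegree ≤ N := by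
        have := Polynomial.natDegree_mul (Polynomial.X_ne_zero (R := R)) hz₁
        simp [Polynomial.natDegree_X] at this
        omega
      obtain ⟨n, u, hu, huz⟩ := ih z₁ hdeg' hz₁ (fun w hw => h w (hw.mul_left X))
      exact ⟨n + 1, u, hu, by rw [huz]; ring⟩

open Polynomial in
private lemma key_equiv {R : Type*} [CommRing R] [IsDomain R] (z : R[X]) :
    ((∃ t, z = X * t) ∧ (∃ t, z = (X + (-1)) * t + 1) ∧
      ∀ w, (∃ v, z = w * v) → ((∃ v, w * v = 1) ∨ ∃ v, w = X * v)) ↔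
    ∃ n : ℕ, 1 ≤ n ∧ z = (X : R[X]) ^ n := by
  constructor
  · rintro ⟨⟨t, ht⟩, ⟨s, hs⟩, hdiv⟩
    have hXm1 : ¬ IsUnit (X - 1 : R[X]) := fun h => by
      have := Polynomial.natDegree_eq_zero_of_isUnit h
      rw [show (X - 1 : R[X]) = X - C 1 by simp, Polynomial.natDegree_X_sub_C] at this
      exact one_ne_zero this
    have hz : z ≠ 0 := by
      rintro rfl
      exact hXm1 (IsUnit.of_mul_eq_one (-s) (by linear_combination hs))
    obtain ⟨n, u, hu, rfl⟩ := factor_unit_pow_X z.natDegree z le_rfl hz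
      (fun w ⟨v, hv⟩ => by
        rcases hdiv w ⟨v, hv⟩ with ⟨v', hv'⟩ | ⟨v', hv'⟩
        · exact Or.inl (IsUnit.of_mul_eq_one _ hv')
        · exact Or.inr ⟨v', hv'⟩)
    have hn : 1 ≤ n := by
      rcases Nat.eq_zero_or_pos n with rfl | h
      · exfalso
        apply Polynomial.not_isUnit_X (R := R)
        have hXu : (X : R[X]) ∣ u * X ^ 0 := ⟨t, ht⟩
        exact isUnit_of_dvd_unit hXu (by simpa using hu)
      · exact h
    have hXn : (X - 1 : R[X]) ∣ X ^ n - 1 := by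
      simpa using sub_dvd_pow_sub_pow (X : R[X]) 1 n
    obtain ⟨q, hq⟩ := hXn
    have hu1 : (X - 1 : R[X]) ∣ u - 1 := ⟨s - u * q, by linear_combination hs - u * hq⟩
    have : u = 1 := by
      by_contra hne
      have h1 : u - 1 ≠ 0 := sub_ne_zero.2 hne
      have := Polynomial.natDegree_le_of_dvd hu1 h1
      obtain ⟨r, hr, rfl⟩ := Polynomial.isUnit_iff.1 hu
      rw [show (X - 1 : R[X]) = X - C 1 by simp, Polynomial.natDegree_X_sub_C] at this
      have h2 : (C r - 1 : R[X]).natDegree = 0 := by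
        rw [show (C r - 1 : R[X]) = C (r - 1) by simp [map_sub]]
        exact Polynomial.natDegree_C _
      omega
    exact ⟨n, hn, by rw [this, one_mul]⟩
  · rintro ⟨n, hn, rfl⟩
    refine ⟨⟨X ^ (n - 1), by rw [← pow_succ']; congr 1; omega⟩, ?_, ?_⟩
    · obtain ⟨q, hq⟩ : (X - 1 : R[X]) ∣ X ^ n - 1 := by
        simpa using sub_dvd_pow_sub_pow (X : R[X]) 1 n
      exact ⟨q, by linear_combination hq⟩
    · rintro w ⟨v, hv⟩
      rcases divisor_pow_X n w v hv.symm with hu | ⟨v', hv'⟩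
      · obtain ⟨w', hw'⟩ := hu.exists_right_inv
        exact Or.inl ⟨w', hw'⟩
      · exact Or.inr ⟨v', hv'⟩

/-- A subset `s` of a ring `R` is definable with parameters in the first-order
language of rings if it is definable over the parameter set `Set.univ` in the
language `FirstOrder.Language.ring`, where `R` is viewed as a structure for that
language via its ring operations. -/
def DefinableInRingLang (R : Type*) [Ring R] (s : Set R) : Prop :=
  letI := FirstOrder.Ring.compatibleRingOfRing R
  Set.Definable₁ (Set.univ : Set R) FirstOrder.Language.ring s

open Polynomial in
theorem stmt_8 {R : Type*} [CommRing R] [IsDomain R] :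
    DefinableInRingLang (R[X]) {z : R[X] | ∃ n : ℕ, 1 ≤ n ∧ z = (X : R[X]) ^ n} := by
  open FirstOrder FirstOrder.Language FirstOrder.Ring in
  letI := FirstOrder.Ring.compatibleRingOfRing (R[X])
  show Set.Definable₁ (Set.univ : Set (R[X])) Language.ring
      {z : R[X] | ∃ n : ℕ, 1 ≤ n ∧ z = (X : R[X]) ^ n}
  rw [Set.Definable₁, Set.definable_iff_exists_formula_sum]
  set A : Set (R[X]) := Set.univ with hA
  let α : Type _ := A ⊕ Fin 1
  let xT : ∀ k, Language.ring.Term (α ⊕ Fin k) :=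
    fun k => Term.var (Sum.inl (Sum.inl ⟨X, Set.mem_univ X⟩))
  let zT : ∀ k, Language.ring.Term (α ⊕ Fin k) :=
    fun k => Term.var (Sum.inl (Sum.inr 0))
  refine ⟨(BoundedFormula.ex ((zT 1) =' (xT 1 * &0))) ⊓
      ((BoundedFormula.ex ((zT 1) =' ((xT 1 + (-1)) * &0 + 1))) ⊓
      (BoundedFormula.all
        ((BoundedFormula.ex ((zT 2) =' (&0 * &1))) ⟹
          ((BoundedFormula.ex ((&0 * &1) =' 1)) ⊔
           (BoundedFormula.ex ((&0 : Language.ring.Term (α ⊕ Fin 2)) =' (xT 2 * &1))))))), ?_⟩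
  ext v
  rw [Set.mem_setOf_eq, Set.mem_setOf_eq, Set.mem_setOf_eq]
  rw [← key_equiv (v 0)]
  simp only [Formula.Realize, BoundedFormula.realize_inf, BoundedFormula.realize_ex,
    BoundedFormula.realize_all, BoundedFormula.realize_imp, BoundedFormula.realize_sup,
    BoundedFormula.realize_bdEqual, Term.realize_var, Term.realize, realize_add, realize_mul,
    realize_neg, realize_one, Function.comp, Sum.elim_inl, Sum.elim_inr, Fin.snoc, zT, xT]
  simp
end

section
/- Let K be a field of characteristic zero. Then the image of ℤ in the polynomial ring K[X] is definable with parameters in the first-order language of rings in K[X]. -/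
open Polynomial FirstOrder FirstOrder.Ring FirstOrder.Language

namespace Stmt11Aux

variable {K : Type*} [Field K] [CharZero K]

theorem cheb_step (R : Type*) [CommRing R] (m : ℤ) :
    Chebyshev.T R (m + 1) ^ 2 - (X ^ 2 - 1) * Chebyshev.U R m ^ 2 =
      Chebyshev.T R m ^ 2 - (X ^ 2 - 1) * Chebyshev.U R (m - 1) ^ 2 := by
  have h1 := Chebyshev.T_eq_X_mul_T_sub_pol_U R (m - 1)
  have h2 := Chebyshev.U_eq_X_mul_U_add_T R (m - 1)
  rw [show m - 1 + 2 = m + 1 by ring, show m - 1 + 1 = m by ring] at h1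
  rw [show m - 1 + 1 = m by ring] at h2
  linear_combination (Chebyshev.T R (m+1) + X * Chebyshev.T R m + ((X:R[X])^2-1) * Chebyshev.U R (m-1)) * h1 -
    ((X:R[X])^2-1) * (Chebyshev.U R m + X * Chebyshev.U R (m-1) + Chebyshev.T R m) * h2

theorem cheb_pell (R : Type*) [CommRing R] (m : ℤ) :
    Chebyshev.T R m ^ 2 - (X ^ 2 - 1) * Chebyshev.U R (m - 1) ^ 2 = 1 := by
  induction m using Polynomial.Chebyshev.induct with
  | zero => simp
  | one =>
      simp only [Chebyshev.T_one, show (1:ℤ)-1 = 0 by ring, Chebyshev.U_zero]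
      ring
  | add_two n ih1 ih2 =>
      have h := cheb_step R ((n : ℤ) + 1)
      rw [show ((n:ℤ) + 1 + 1) = (n:ℤ) + 2 by ring, show ((n:ℤ)+1-1) = (n:ℤ) by ring] at h
      rw [show ((n:ℤ) + 2 - 1) = (n:ℤ) + 1 by ring]
      rw [h]
      rwa [show ((n:ℤ)+1-1) = (n:ℤ) by ring] at ih1
  | neg_add_one n ih1 ih2 =>
      have h := cheb_step R (-(n:ℤ) - 1)
      rw [show (-(n:ℤ) - 1 + 1) = -(n:ℤ) by ring] at h
      rw [show (-(n:ℤ) - 1 - 1) = -(n:ℤ) - 2 by ring] at h ⊢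
      rw [← h]
      rwa [show (-(n:ℤ) - 1) = -(n:ℤ) - 1 by ring] at ih1

theorem U_eval_one (K : Type*) [Field K] [CharZero K] (m : ℤ) :
    (Chebyshev.U K m).eval 1 = (m : K) + 1 := by
  induction m using Polynomial.Chebyshev.induct with
  | zero => simp
  | one => simp [Chebyshev.U_one]; norm_num
  | add_two n ih1 ih2 =>
      have h := Chebyshev.U_add_two K n
      have := congrArg (eval 1) h
      simp only [eval_sub, eval_mul, eval_ofNat, eval_X, eval_one] at this
      rw [this, ih1, ih2]; push_cast; ring
  | neg_add_one n ih1 ih2 =>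
      have h := Chebyshev.U_add_two K (-(n:ℤ) - 1)
      rw [show (-(n:ℤ) - 1 + 2) = -(n:ℤ) + 1 by ring, show (-(n:ℤ) - 1 + 1) = -(n:ℤ) by ring] at h
      have := congrArg (eval 1) h
      simp only [eval_sub, eval_mul, eval_ofNat, eval_X, eval_one] at this
      rw [ih1, ih2] at this
      push_cast at this ⊢
      linear_combination this


theorem descent (n : ℕ) : ∀ x y : K[X], y.natDegree < n →
    x ^ 2 - (X ^ 2 - 1) * y ^ 2 = 1 → ∃ m : ℤ, y.eval 1 = (m : K) := by
  induction n with
  | zero => intro x y hd _; exact absurd hd (Nat.not_lt_zero _)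
  | succ n ih =>
    intro x y hd h
    by_cases hy0 : y = 0
    · exact ⟨0, by simp [hy0]⟩
    by_cases hy1 : y ^ 2 = 1
    · rcases mul_eq_zero.1 (show (y - 1) * (y + 1) = 0 by linear_combination hy1) with h1 | h1
      · exact ⟨1, by rw [show y = 1 by linear_combination h1]; simp⟩
      · exact ⟨-1, by rw [show y = -1 by linear_combination h1]; simp⟩
    -- main case
    set d := y.natDegree with hdef
    have hb : y.leadingCoeff ≠ 0 := leadingCoeff_ne_zero.2 hy0
    have hX2 : ((X : K[X]) ^ 2 - 1).natDegree = 2 := by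
      rw [show (1 : K[X]) = C 1 by simp]; exact natDegree_X_pow_sub_C
    have hX2ne : ((X : K[X]) ^ 2 - 1) ≠ 0 := fun hc => by simp [hc] at hX2
    have hx2 : x ^ 2 = 1 + (X ^ 2 - 1) * y ^ 2 := by linear_combination h
    have hmul : (((X : K[X]) ^ 2 - 1) * y ^ 2).natDegree = 2 + 2 * d := by
      rw [natDegree_mul hX2ne (pow_ne_zero _ hy0), hX2, natDegree_pow]; try ring
    have hrhs : ((1 : K[X]) + (X ^ 2 - 1) * y ^ 2).natDegree = 2 + 2 * d := by
      rw [natDegree_add_eq_right_of_natDegree_lt (by rw [hmul]; simp), hmul]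
    have hx0 : x ≠ 0 := by
      intro hc
      rw [hc] at hx2
      have := congrArg natDegree hx2.symm
      rw [hrhs] at this; simp at this
    have hxd : x.natDegree = d + 1 := by
      have := congrArg natDegree hx2
      rw [hrhs, natDegree_pow] at this; omega
    -- leading coefficients
    have hlead : x.leadingCoeff ^ 2 = y.leadingCoeff ^ 2 := by
      have := congrArg (fun p => coeff p (2 + 2 * d)) hx2
      simp only [coeff_add] at this
      rw [show ((1:K[X]).coeff (2 + 2*d)) = 0 by rw [coeff_one]; simp, zero_add] at this
      have h1 : coeff (x ^ 2) (2 + 2 * d) = (x ^ 2).leadingCoeff := by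
        rw [leadingCoeff, natDegree_pow, hxd]; ring_nf
      have h2 : coeff ((X ^ 2 - 1) * y ^ 2 : K[X]) (2 + 2 * d)
          = (((X : K[X]) ^ 2 - 1) * y ^ 2).leadingCoeff := by
        rw [leadingCoeff, hmul]
      rw [h1, h2, leadingCoeff_pow, leadingCoeff_mul, leadingCoeff_pow] at this
      rw [this]
      have : ((X : K[X]) ^ 2 - 1).leadingCoeff = 1 := by
        rw [show ((X : K[X])^2 - 1) = X^2 - C 1 by simp]
        exact (monic_X_pow_sub_C 1 (by norm_num)).leadingCoeff
      rw [this, one_mul]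
    -- choose sign
    obtain ⟨x', hx'sq, hx'deg, hx'lead⟩ :
        ∃ x' : K[X], x' ^ 2 = x ^ 2 ∧ x'.natDegree = d + 1 ∧ x'.leadingCoeff = y.leadingCoeff := by
      rcases mul_eq_zero.1 (show (x.leadingCoeff - y.leadingCoeff) * (x.leadingCoeff + y.leadingCoeff) = 0 by
        linear_combination hlead) with h1 | h1
      · exact ⟨x, by ring, hxd, by linear_combination h1⟩
      · exact ⟨-x, by ring, by simpa using hxd, by rw [leadingCoeff_neg]; linear_combination -h1⟩
    have hx'0 : x' ≠ 0 := fun hc => by simp [hc] at hx'lead; exact hb hx'lead.symm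
    set p := X * y - x' with hp
    set q := X * y + x' with hq
    have hpq : p * q = y ^ 2 - 1 := by
      simp only [hp, hq]
      linear_combination -hx2 - hx'sq
    have hy21 : y ^ 2 - 1 ≠ 0 := sub_ne_zero.2 hy1
    have hpne : p ≠ 0 := fun hc => hy21 (by rw [← hpq, hc, zero_mul])
    have hqne : q ≠ 0 := fun hc => hy21 (by rw [← hpq, hc, mul_zero])
    have hXy : (X * y).natDegree = d + 1 := by
      rw [natDegree_mul X_ne_zero hy0, natDegree_X]; omega
    have hqd : q.natDegree = d + 1 := by
      refine le_antisymm (le_trans (natDegree_add_le _ _) (by rw [hXy, hx'deg]; simp)) ?_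
      refine le_natDegree_of_ne_zero ?_
      rw [coeff_add, coeff_X_mul, show y.coeff d = y.leadingCoeff from rfl,
        show x'.coeff (d+1) = x'.leadingCoeff by rw [leadingCoeff, hx'deg], hx'lead, ← two_mul]
      exact mul_ne_zero two_ne_zero hb
    have hsum : p.natDegree + q.natDegree = 2 * d := by
      rw [← natDegree_mul hpne hqne, hpq, show (y^2 - 1 : K[X]) = y^2 - C 1 by simp,
        natDegree_sub_C, natDegree_pow]; try ring
    have hpd : p.natDegree = d - 1 ∧ 1 ≤ d := by omega
    -- descent
    have heq : (X * x' - (X ^ 2 - 1) * y) ^ 2 - (X ^ 2 - 1) * p ^ 2 = 1 := by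
      simp only [hp]
      linear_combination h + hx'sq
    obtain ⟨m, hm⟩ := ih (X * x' - (X ^ 2 - 1) * y) p (by omega) heq
    -- x' eval at 1
    have hx1 : (x'.eval 1) ^ 2 = 1 := by
      have := congrArg (eval 1) hx'sq
      have h2 := congrArg (eval 1) h
      simp only [eval_sub, eval_mul, eval_pow, eval_one, eval_X] at this h2
      rw [this]; linear_combination h2
    have hyev : y.eval 1 = p.eval 1 + x'.eval 1 := by
      simp only [hp, eval_sub, eval_mul, eval_X, one_mul]; ring
    rcases mul_eq_zero.1 (show (x'.eval 1 - 1) * (x'.eval 1 + 1) = 0 by linear_combination hx1) with h1 | h1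
    · exact ⟨m + 1, by rw [hyev, hm, show x'.eval 1 = 1 by linear_combination h1]; push_cast; ring⟩
    · exact ⟨m - 1, by rw [hyev, hm, show x'.eval 1 = -1 by linear_combination h1]; push_cast; ring⟩

theorem mem_int_iff (f : K[X]) :
    f ∈ Set.range (Int.cast : ℤ → K[X]) ↔
      ((f = 0 ∨ ∃ u, f * u = 1) ∧
        ∃ x y z : K[X], x ^ 2 - (X ^ 2 - 1) * y ^ 2 = 1 ∧ y - f = (X - 1) * z) := by
  constructor
  · rintro ⟨m, rfl⟩
    constructor
    · by_cases hm : m = 0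
      · exact Or.inl (by simp [hm])
      · refine Or.inr ⟨C ((m : K))⁻¹, ?_⟩
        rw [show ((m : ℤ) : K[X]) = C ((m : K)) from (C_eq_intCast m).symm, ← C_mul,
          mul_inv_cancel₀ (by exact_mod_cast hm), C_1]
    · refine ⟨Chebyshev.T K m, Chebyshev.U K (m - 1), ?_⟩
      have hroot : IsRoot (Chebyshev.U K (m - 1) - ((m : ℤ) : K[X])) 1 := by
        simp [IsRoot, U_eval_one]
      obtain ⟨z, hz⟩ := (dvd_iff_isRoot).2 hroot
      exact ⟨z, cheb_pell K m, by rw [hz]; simp⟩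
  · rintro ⟨hconst, x, y, z, hpell, hz⟩
    obtain ⟨m, hm⟩ := descent (y.natDegree + 1) x y (Nat.lt_succ_self _) hpell
    have hfev : f.eval 1 = (m : K) := by
      have := congrArg (eval 1) hz
      simp only [eval_sub, eval_mul, eval_X, eval_one, sub_self, zero_mul] at this
      rw [← hm]; linear_combination -this
    rcases hconst with hf0 | ⟨u, hu⟩
    · exact ⟨0, by simp [hf0]⟩
    · obtain ⟨r, hr, hcr⟩ := Polynomial.isUnit_iff.1 (IsUnit.of_mul_eq_one (a := f) u hu)
      refine ⟨m, ?_⟩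
      have : r = (m : K) := by
        have := congrArg (eval 1) hcr
        simp only [eval_C] at this
        rw [this, hfev]
      rw [← hcr, this]
      exact C_eq_intCast m

noncomputable section

abbrev Var (R : Type*) := ((Set.univ : Set R) ⊕ Fin 1) ⊕ Fin 4

def tX (R : Type*) [Ring R] : FreeCommRing (Var R[X]) :=
  FreeCommRing.of (Sum.inl (Sum.inl ⟨Polynomial.X, Set.mem_univ _⟩))
def vN (R : Type*) [Ring R] : FreeCommRing (Var R[X]) := FreeCommRing.of (Sum.inl (Sum.inr 0))
def vU (R : Type*) [Ring R] : FreeCommRing (Var R[X]) := FreeCommRing.of (Sum.inr 0)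
def vX (R : Type*) [Ring R] : FreeCommRing (Var R[X]) := FreeCommRing.of (Sum.inr 1)
def vY (R : Type*) [Ring R] : FreeCommRing (Var R[X]) := FreeCommRing.of (Sum.inr 2)
def vZ (R : Type*) [Ring R] : FreeCommRing (Var R[X]) := FreeCommRing.of (Sum.inr 3)

def myFormula (R : Type*) [Ring R] :
    Language.ring.BoundedFormula ((Set.univ : Set R[X]) ⊕ Fin 1) 4 :=
  ((Term.bdEqual (termOfFreeCommRing (vN R)) (termOfFreeCommRing 0) ⊔
    Term.bdEqual (termOfFreeCommRing (vN R * vU R)) (termOfFreeCommRing 1)) ⊓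
  (Term.bdEqual (termOfFreeCommRing (vX R ^ 2 - (tX R ^ 2 - 1) * vY R ^ 2))
      (termOfFreeCommRing 1) ⊓
    Term.bdEqual (termOfFreeCommRing (vY R - vN R))
      (termOfFreeCommRing ((tX R - 1) * vZ R))))


theorem test {K : Type*} [Field K] [CharZero K] :
    letI := FirstOrder.Ring.compatibleRingOfRing (K[X])
    Set.Definable₁ (Set.univ : Set K[X]) Language.ring (Set.range (Int.cast : ℤ → K[X])) := by
  letI := FirstOrder.Ring.compatibleRingOfRing (K[X])
  rw [Set.Definable₁, Set.definable_iff_exists_formula_sum]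
  refine ⟨(myFormula K).exs, ?_⟩
  ext v
  rw [Set.mem_setOf_eq, Set.mem_setOf_eq, mem_int_iff (v 0),
    BoundedFormula.realize_exs]
  simp only [myFormula, BoundedFormula.realize_inf, BoundedFormula.realize_sup,
    BoundedFormula.realize_bdEqual, realize_termOfFreeCommRing,
    map_mul, map_sub, map_pow, map_one, map_zero, FreeCommRing.lift_of,
    tX, vN, vU, vX, vY, vZ, Sum.elim_inl, Sum.elim_inr]
  constructor
  · rintro ⟨h1, x, y, z, h2, h3⟩
    rcases h1 with h0 | ⟨u, hu⟩
    · exact ⟨![1, x, y, z], Or.inl h0, by simpa using h2, by simpa using h3⟩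
    · exact ⟨![u, x, y, z], Or.inr (by simpa using hu), by simpa using h2, by simpa using h3⟩
  · rintro ⟨g, hg1, hg2, hg3⟩
    exact ⟨hg1.imp id (fun h => ⟨g 0, h⟩), g 1, g 2, g 3, hg2, hg3⟩
end

end Stmt11Aux

open Polynomial in
theorem stmt_11 {K : Type*} [Field K] [CharZero K] :
    DefinableInRingLang (K[X]) (Set.range (Int.cast : ℤ → K[X])) := by
  exact Stmt11Aux.test
end

section
/- Let R be a nontrivial commutative ring of characteristic zero. Suppose that in the polynomial ring R[X] both the set of constant polynomials {C r : r ∈ R} and the set of positive powers {X^n : n ∈ ℕ, n ≥ 1} are definable with parameters in the first-order language of rings. Then the image of ℤ in R[X] is definable with parameters in the first-order language of rings in R[X]. -/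
open FirstOrder Language Polynomial

lemma definable_freeCommRing_eq {M : Type*} [CommRing M] [FirstOrder.Ring.CompatibleRing M]
    {n : ℕ} (p q : FreeCommRing (M ⊕ Fin n)) :
    (Set.univ : Set M).Definable Language.ring
      {v : Fin n → M | FreeCommRing.lift (Sum.elim id v) p
        = FreeCommRing.lift (Sum.elim id v) q} := by
  rw [Set.definable_iff_exists_formula_sum]
  let u : M → (Set.univ : Set M) := fun m => ⟨m, Set.mem_univ m⟩
  refine ⟨Term.equal
      ((FirstOrder.Ring.termOfFreeCommRing p).relabel (Sum.map u id))
      ((FirstOrder.Ring.termOfFreeCommRing q).relabel (Sum.map u id)), ?_⟩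
  ext v
  have h : (Sum.elim (fun x : (Set.univ : Set M) => (x : M)) v) ∘ Sum.map u id
      = Sum.elim id v := by
    funext a; cases a <;> rfl
  simp only [Set.mem_setOf_eq, Formula.realize_equal, Term.realize_relabel,
    FirstOrder.Ring.realize_termOfFreeCommRing]
  rw [h]

lemma key {R : Type*} [CommRing R] (z : R[X]) :
    z ∈ Set.range (Int.cast : ℤ → R[X]) ↔
      z ∈ Set.range (C : R → R[X]) ∧ (z = 0 ∨ ∃ p, (∃ n : ℕ, 1 ≤ n ∧ p = (X : R[X]) ^ n) ∧
        ∃ y w, p - 1 = (X - 1) * y ∧ (z - y = (X - 1) * w ∨ z + y = (X - 1) * w)) := by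
  constructor
  · rintro ⟨m, rfl⟩
    refine ⟨⟨(m : R), by simp⟩, ?_⟩
    rcases eq_or_ne m 0 with rfl | hm
    · left; simp
    right
    set n := m.natAbs with hn
    have hn1 : 1 ≤ n := Int.natAbs_pos.2 hm
    refine ⟨X ^ n, ⟨n, hn1, rfl⟩, ∑ i ∈ Finset.range n, X ^ i, ?_⟩
    have hgeom : (X : R[X]) ^ n - 1 = (X - 1) * ∑ i ∈ Finset.range n, X ^ i :=
      (mul_geom_sum X n).symm
    have heval : Polynomial.eval (1 : R) (∑ i ∈ Finset.range n, (X : R[X]) ^ i) = n := by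
      simp
    rcases le_or_gt 0 m with hm0 | hm0
    · have hcast : ((n : ℕ) : R) = ((m : ℤ) : R) := by
        have h1 : ((n : ℕ) : ℤ) = m := by rw [hn]; exact Int.natAbs_of_nonneg hm0
        exact_mod_cast congrArg (Int.cast : ℤ → R) h1
      have hdvd1 : (X - C 1 : R[X]) ∣ ((m : R[X]) - ∑ i ∈ Finset.range n, X ^ i) := by
        refine dvd_iff_isRoot.2 ?_
        simp only [IsRoot, eval_sub, eval_intCast, heval, hcast]
        simp
      have hdvd : (X - 1 : R[X]) ∣ ((m : R[X]) - ∑ i ∈ Finset.range n, X ^ i) := by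
        simpa using hdvd1
      obtain ⟨w, hw⟩ := hdvd
      exact ⟨w, hgeom, Or.inl hw⟩
    · have hcast : ((n : ℕ) : R) = -((m : ℤ) : R) := by
        have h1 : ((n : ℕ) : ℤ) = -m := by rw [hn]; exact Int.ofNat_natAbs_of_nonpos hm0.le
        have := congrArg (Int.cast : ℤ → R) h1
        push_cast at this
        exact_mod_cast this
      have hdvd1 : (X - C 1 : R[X]) ∣ ((m : R[X]) + ∑ i ∈ Finset.range n, X ^ i) := by
        refine dvd_iff_isRoot.2 ?_
        simp only [IsRoot, eval_add, eval_intCast, heval, hcast]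
        simp
      have hdvd : (X - 1 : R[X]) ∣ ((m : R[X]) + ∑ i ∈ Finset.range n, X ^ i) := by
        simpa using hdvd1
      obtain ⟨w, hw⟩ := hdvd
      exact ⟨w, hgeom, Or.inr hw⟩
  · rintro ⟨⟨r, rfl⟩, h | ⟨p, ⟨n, hn, rfl⟩, y, w, hy, hw⟩⟩
    · exact ⟨0, by simp [h]⟩
    · have hgeom : (X : R[X]) ^ n - 1 = (X - 1) * ∑ i ∈ Finset.range n, X ^ i :=
        (mul_geom_sum X n).symm
      have hreg : IsRegular (X - 1 : R[X]) := by
        have : (X - C 1 : R[X]).Monic := monic_X_sub_C 1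
        simpa using this.isRegular
      have hc : (X - 1 : R[X]) * y = (X - 1) * ∑ i ∈ Finset.range n, X ^ i := by
        rw [← hy, ← hgeom]
      have hy' : y = ∑ i ∈ Finset.range n, X ^ i := hreg.left hc
      subst hy'
      have heval : Polynomial.eval (1 : R) (∑ i ∈ Finset.range n, (X : R[X]) ^ i) = n := by
        simp
      rcases hw with hw | hw
      · refine ⟨(n : ℤ), ?_⟩
        have h1 := congrArg (Polynomial.eval (1 : R)) hw
        simp only [eval_sub, eval_C, heval, eval_mul, eval_X, eval_one, sub_self,
          zero_mul] at h1
        have hr : r = (n : R) := sub_eq_zero.mp h1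
        rw [hr]
        push_cast
        simp
      · refine ⟨-(n : ℤ), ?_⟩
        have h1 := congrArg (Polynomial.eval (1 : R)) hw
        simp only [eval_add, eval_C, heval, eval_mul, eval_sub, eval_X, eval_one, sub_self,
          zero_mul] at h1
        have hr : r = -(n : R) := eq_neg_of_add_eq_zero_left h1
        rw [hr]
        push_cast
        simp


open FirstOrder Language Polynomial

section Defble
variable {R : Type*} [CommRing R]

lemma defin_eq_aux {n : ℕ} (p q : FreeCommRing (R[X] ⊕ Fin n)) (s : Set (Fin n → R[X]))
    [FirstOrder.Ring.CompatibleRing R[X]]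
    (hs : ∀ v : Fin n → R[X], v ∈ s ↔
      FreeCommRing.lift (Sum.elim id v) p = FreeCommRing.lift (Sum.elim id v) q) :
    (Set.univ : Set R[X]).Definable Language.ring s := by
  have h := definable_freeCommRing_eq (M := R[X]) p q
  convert h using 1
  ext v; rw [hs]; rfl

end Defble

open Polynomial in
theorem stmt_12 {R : Type*} [CommRing R] [Nontrivial R] [CharZero R]
    (hconst : DefinableInRingLang (R[X]) (Set.range (C : R → R[X])))
    (hpow : DefinableInRingLang (R[X]) {z : R[X] | ∃ n : ℕ, 1 ≤ n ∧ z = (X : R[X]) ^ n}) :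
    DefinableInRingLang (R[X]) (Set.range (Int.cast : ℤ → R[X])) := by
  classical
  letI := FirstOrder.Ring.compatibleRingOfRing (R[X])
  have hconst' : (Set.univ : Set R[X]).Definable Language.ring
      {x : Fin 1 → R[X] | x 0 ∈ Set.range (C : R → R[X])} := hconst
  have hpow' : (Set.univ : Set R[X]).Definable Language.ring
      {x : Fin 1 → R[X] | x 0 ∈ {z : R[X] | ∃ n : ℕ, 1 ≤ n ∧ z = (X : R[X]) ^ n}} := hpow
  have hE1 : (Set.univ : Set R[X]).Definable Language.ring
      {v : Fin 4 → R[X] | v 1 - 1 = (X - 1) * v 2} := by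
    apply defin_eq_aux (FreeCommRing.of (Sum.inr 1) - 1)
      ((FreeCommRing.of (Sum.inl X) - 1) * FreeCommRing.of (Sum.inr 2))
    intro v; simp
  have hE2 : (Set.univ : Set R[X]).Definable Language.ring
      {v : Fin 4 → R[X] | v 0 - v 2 = (X - 1) * v 3} := by
    apply defin_eq_aux (FreeCommRing.of (Sum.inr 0) - FreeCommRing.of (Sum.inr 2))
      ((FreeCommRing.of (Sum.inl X) - 1) * FreeCommRing.of (Sum.inr 3))
    intro v; simp
  have hE3 : (Set.univ : Set R[X]).Definable Language.ring
      {v : Fin 4 → R[X] | v 0 + v 2 = (X - 1) * v 3} := by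
    apply defin_eq_aux (FreeCommRing.of (Sum.inr 0) + FreeCommRing.of (Sum.inr 2))
      ((FreeCommRing.of (Sum.inl X) - 1) * FreeCommRing.of (Sum.inr 3))
    intro v; simp
  have hZ : (Set.univ : Set R[X]).Definable Language.ring
      {x : Fin 1 → R[X] | x 0 = 0} := by
    apply defin_eq_aux (FreeCommRing.of (Sum.inr 0)) 0
    intro v; simp
  set f0 : Fin 1 → Fin 4 := fun _ => 0 with hf0
  set f1 : Fin 1 → Fin 4 := fun _ => 1 with hf1
  set T : Set (Fin 4 → R[X]) :=
    ((fun g : Fin 4 → R[X] => g ∘ f1) ⁻¹'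
        {x : Fin 1 → R[X] | x 0 ∈ {z : R[X] | ∃ n : ℕ, 1 ≤ n ∧ z = (X : R[X]) ^ n}}) ∩
      ({v : Fin 4 → R[X] | v 1 - 1 = (X - 1) * v 2} ∩
        ({v : Fin 4 → R[X] | v 0 - v 2 = (X - 1) * v 3} ∪
          {v : Fin 4 → R[X] | v 0 + v 2 = (X - 1) * v 3})) with hTdef
  have hT : (Set.univ : Set R[X]).Definable Language.ring T :=
    (hpow'.preimage_comp f1).inter (hE1.inter (hE2.union hE3))
  have hTimg := hT.image_comp f0
  show (Set.univ : Set R[X]).Definable Language.ring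
      {x : Fin 1 → R[X] | x 0 ∈ Set.range (Int.cast : ℤ → R[X])}
  have hfinal : {x : Fin 1 → R[X] | x 0 ∈ Set.range (Int.cast : ℤ → R[X])} =
      {x : Fin 1 → R[X] | x 0 ∈ Set.range (C : R → R[X])} ∩
        ({x : Fin 1 → R[X] | x 0 = 0} ∪ (fun g : Fin 4 → R[X] => g ∘ f0) '' T) := by
    ext x
    simp only [Set.mem_setOf_eq, Set.mem_inter_iff, Set.mem_union, Set.mem_image, hTdef,
      Set.mem_preimage, Function.comp]
    rw [key (x 0)]
    constructor
    · rintro ⟨hc, h0 | ⟨p, hp, y, w, hy, hw⟩⟩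
      · exact ⟨hc, Or.inl h0⟩
      · refine ⟨hc, Or.inr ⟨![x 0, p, y, w], ⟨?_, ?_, ?_⟩, ?_⟩⟩
        · simpa [hf1] using hp
        · simpa using hy
        · rcases hw with hw | hw
          · exact Or.inl (by simpa using hw)
          · exact Or.inr (by simpa using hw)
        · funext i
          have hi : i = 0 := Subsingleton.elim i 0
          subst hi
          simp [hf0]
    · rintro ⟨hc, h0 | ⟨v, ⟨hP, hy, hw⟩, hvx⟩⟩
      · exact ⟨hc, Or.inl h0⟩
      · have hx0 : x 0 = v 0 := by rw [← hvx]; simp [hf0]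
        refine ⟨hc, Or.inr ⟨v 1, by simpa [hf1] using hP, v 2, v 3, hy, ?_⟩⟩
        rw [hx0]
        exact hw
  rw [hfinal]
  exact hconst'.inter (hZ.union hTimg)
end
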